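/- Let n ≥ 1 and 0 < k < n, and let q, v ∈ ℂ with 0 < |q| < 1 and |v| = 1. Then X(vq^k,qⁿ) = Σ_{l≥1} l v^l q^{kl} + Σ_{m≥1} Σ_{l≥1} ( l v^l q^{(mn+k)l} + l v^{−l} q^{(mn−k)l} − 2 l q^{mnl} ) and Y(vq^k,qⁿ) = Σ_{l≥2} ((l−1)l/2) v^l q^{kl} + Σ_{m≥1} Σ_{l≥1} ( ((l−1)l/2) v^l q^{(mn+k)l} − (l(l+1)/2) v^{−l} q^{(mn−k)l} + l q^{mnl} ), all series converging absolutely. -/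

import Mathlib

set_option maxHeartbeats 1600000


/-- `s₁(Q) = Σ_{m≥1} σ₁(m) Qᵐ`. -/
noncomputable def s1ser (Q : ℂ) : ℂ :=
  ∑' m : ℕ, (∑ d ∈ Nat.divisors (m + 1), (d : ℂ)) * Q ^ (m + 1)

/-- `X(u,Q) = Σ_{m∈ℤ} Qᵐu/(1−Qᵐu)² − 2s₁(Q)`. -/
noncomputable def Xtate (u Q : ℂ) : ℂ :=
  (∑' m : ℤ, Q ^ m * u / (1 - Q ^ m * u) ^ 2) - 2 * s1ser Q

/-- `Y(u,Q) = Σ_{m∈ℤ} (Qᵐu)²/(1−Qᵐu)³ + s₁(Q)`. -/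
noncomputable def Ytate (u Q : ℂ) : ℂ :=
  (∑' m : ℤ, (Q ^ m * u) ^ 2 / (1 - Q ^ m * u) ^ 3) + s1ser Q

lemma powvq (v q : ℂ) (a c : ℕ) : (v * q ^ a) ^ c = v ^ c * q ^ (a * c) := by
  rw [mul_pow, ← pow_mul]

lemma powvq' (v q : ℂ) (a c : ℕ) :
    (v⁻¹ * q ^ a) ^ c = v ^ (-(c : ℤ)) * q ^ (a * c) := by
  rw [mul_pow, ← pow_mul, inv_pow, ← zpow_natCast v c, ← zpow_neg]

lemma geo2 {x : ℂ} (hx : ‖x‖ < 1) :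
    HasSum (fun l : ℕ => ((l + 1 : ℕ) : ℂ) * x ^ (l + 1)) (x / (1 - x) ^ 2) := by
  have h := hasSum_coe_mul_geometric_of_norm_lt_one (𝕜 := ℂ) hx
  have h2 := (hasSum_nat_add_iff' (f := fun n : ℕ => (n : ℂ) * x ^ n) 1).2 h
  simpa using h2

lemma choose2cast (l : ℕ) : ((l + 2).choose 2 : ℂ) = ((l : ℂ) + 1) * ((l : ℂ) + 2) / 2 := by
  have key : ∀ m : ℕ, (m + 2).choose 2 * 2 = (m + 1) * (m + 2) := by
    intro m
    induction m with
    | zero => decide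
    | succ p ih =>
      have h : (p + 3).choose 2 = (p + 2).choose 1 + (p + 2).choose 2 :=
        Nat.choose_succ_succ _ _
      rw [Nat.choose_one_right] at h
      calc (p + 1 + 2).choose 2 * 2 = ((p + 2) + (p + 2).choose 2) * 2 := by
            rw [show p + 1 + 2 = p + 3 from rfl, h]
        _ = (p + 2) * 2 + (p + 2).choose 2 * 2 := by ring
        _ = (p + 2) * 2 + (p + 1) * (p + 2) := by rw [ih]
        _ = (p + 1 + 1) * (p + 1 + 2) := by ring
  have h2 : (((l + 2).choose 2 : ℕ) : ℂ) * 2 = ((l : ℂ) + 1) * ((l : ℂ) + 2) := by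
    have := key l
    have := congrArg (fun t : ℕ => (t : ℂ)) this
    push_cast at this
    convert this using 1
  field_simp [← h2]
  exact h2

lemma geo3 {x : ℂ} (hx : ‖x‖ < 1) :
    HasSum (fun l : ℕ => ((l : ℂ) + 1) * ((l : ℂ) + 2) / 2 * x ^ l) (1 / (1 - x) ^ 3) := by
  have h := hasSum_choose_mul_geometric_of_norm_lt_one (𝕜 := ℂ) 2 hx
  have heq : (fun l : ℕ => ((l : ℂ) + 1) * ((l : ℂ) + 2) / 2 * x ^ l)
      = fun l : ℕ => ((l + 2).choose 2 : ℂ) * x ^ l := by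
    funext l
    rw [choose2cast]
  rw [heq]
  exact h

lemma geo3a {x : ℂ} (hx : ‖x‖ < 1) :
    HasSum (fun l : ℕ => ((l : ℂ) + 1) * ((l : ℂ) + 2) / 2 * x ^ (l + 1))
      (x / (1 - x) ^ 3) := by
  have h := (geo3 hx).mul_left x
  have heq : (fun l : ℕ => ((l : ℂ) + 1) * ((l : ℂ) + 2) / 2 * x ^ (l + 1))
      = fun l : ℕ => x * (((l : ℂ) + 1) * ((l : ℂ) + 2) / 2 * x ^ l) := by
    funext l; ring
  rw [heq, show x * (1 / (1 - x) ^ 3) = x / (1 - x) ^ 3 by ring] at *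
  exact h

lemma geo3b {x : ℂ} (hx : ‖x‖ < 1) :
    HasSum (fun l : ℕ => (l : ℂ) * ((l : ℂ) + 1) / 2 * x ^ (l + 1))
      (x ^ 2 / (1 - x) ^ 3) := by
  have h := (geo3 hx).mul_left (x ^ 2)
  have h2 : HasSum (fun l : ℕ => ((l + 1 : ℕ) : ℂ) * (((l + 1 : ℕ) : ℂ) + 1) / 2 * x ^ (l + 1 + 1))
      (x ^ 2 / (1 - x) ^ 3) := by
    have heq : (fun l : ℕ => ((l + 1 : ℕ) : ℂ) * (((l + 1 : ℕ) : ℂ) + 1) / 2 * x ^ (l + 1 + 1))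
        = fun l : ℕ => x ^ 2 * (((l : ℂ) + 1) * ((l : ℂ) + 2) / 2 * x ^ l) := by
      funext l; push_cast; ring
    rw [heq, show x ^ 2 * (1 / (1 - x) ^ 3) = x ^ 2 / (1 - x) ^ 3 by ring] at *
    exact h
  have h3 := (hasSum_nat_add_iff
    (f := fun l : ℕ => (l : ℂ) * ((l : ℂ) + 1) / 2 * x ^ (l + 1)) 1).1 (by
      convert h2 using 2)
  simpa using h3

lemma sub_inv_ne (y : ℂ) (h1 : y ≠ 1) : (1 : ℂ) - y⁻¹ ≠ 0 := by
  rw [sub_ne_zero]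
  intro h
  exact h1 (by rw [← inv_inv y, ← h, inv_one])

lemma inv2 (y : ℂ) (h0 : y ≠ 0) (h1 : y ≠ 1) :
    y⁻¹ / (1 - y⁻¹) ^ 2 = y / (1 - y) ^ 2 := by
  have h1' : 1 - y ≠ 0 := sub_ne_zero.mpr (Ne.symm h1)
  rw [div_eq_div_iff (pow_ne_zero 2 (sub_inv_ne y h1)) (pow_ne_zero 2 h1')]
  field_simp
  ring

lemma inv3 (y : ℂ) (h0 : y ≠ 0) (h1 : y ≠ 1) :
    (y⁻¹) ^ 2 / (1 - y⁻¹) ^ 3 = -(y / (1 - y) ^ 3) := by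
  have h1' : 1 - y ≠ 0 := sub_ne_zero.mpr (Ne.symm h1)
  rw [show -(y / (1 - y) ^ 3) = (-y) / (1 - y) ^ 3 by ring]
  rw [div_eq_div_iff (pow_ne_zero 3 (sub_inv_ne y h1)) (pow_ne_zero 3 h1')]
  field_simp
  ring

lemma sumbound {r : ℝ} (h0 : 0 ≤ r) (h1 : r < 1) (j : ℕ) :
    Summable (fun p : ℕ × ℕ => ((p.2 + 1 : ℕ) : ℝ) ^ j * r ^ ((p.1 + 1) * (p.2 + 1))) := by
  have hl : Summable (fun l : ℕ => ((l + 1 : ℕ) : ℝ) ^ j * r ^ (l + 1)) := by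
    have hb : ‖r‖ < 1 := by rwa [Real.norm_eq_abs, _root_.abs_of_nonneg h0]
    exact (summable_nat_add_iff (f := fun l : ℕ => ((l : ℕ) : ℝ) ^ j * r ^ l) 1).2
      (summable_pow_mul_geometric_of_norm_lt_one j hb)
  have hm : Summable (fun m : ℕ => r ^ m) := summable_geometric_of_lt_one h0 h1
  have hprod := hm.mul_of_nonneg hl (fun m => pow_nonneg h0 m)
    (fun l => mul_nonneg (pow_nonneg (by positivity) j) (pow_nonneg h0 _))
  refine Summable.of_nonneg_of_le (fun p => by positivity) (fun p => ?_) hprod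
  have hexp : p.1 + (p.2 + 1) ≤ (p.1 + 1) * (p.2 + 1) := by
    have hx : (p.1 + 1) * (p.2 + 1) = p.1 * p.2 + (p.1 + (p.2 + 1)) := by ring
    omega
  refine le_trans (mul_le_mul_of_nonneg_left (pow_le_pow_of_le_one h0 h1.le hexp)
    (by positivity)) (le_of_eq ?_)
  rw [pow_add]; ring

lemma hasSum_s1 {Q : ℂ} (hQ : ‖Q‖ < 1) :
    HasSum (fun p : ℕ × ℕ => ((p.2 + 1 : ℕ) : ℂ) * Q ^ ((p.1 + 1) * (p.2 + 1))) (s1ser Q) := by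
  have hFs : Summable (fun p : ℕ × ℕ => ((p.2 + 1 : ℕ) : ℂ) * Q ^ ((p.1 + 1) * (p.2 + 1))) := by
    apply Summable.of_norm
    apply Summable.of_nonneg_of_le (fun p => norm_nonneg _) _
      (sumbound (norm_nonneg Q) hQ 1)
    intro p
    rw [norm_mul, norm_pow, Complex.norm_natCast, pow_one]
  have hFS := hFs.hasSum
  set S := ∑' p : ℕ × ℕ, ((p.2 + 1 : ℕ) : ℂ) * Q ^ ((p.1 + 1) * (p.2 + 1)) with hSdef
  set G : ℕ × ℕ → ℂ :=
    fun p => if p.1 = 0 ∨ p.2 = 0 then 0 else ((p.2 : ℕ) : ℂ) * Q ^ (p.1 * p.2) with hG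
  have hinj : Function.Injective (fun p : ℕ × ℕ => (p.1 + 1, p.2 + 1)) := by
    intro a b h
    simp only [Prod.mk.injEq, Prod.ext_iff] at h ⊢
    omega
  have hrange : ∀ x ∉ Set.range (fun p : ℕ × ℕ => (p.1 + 1, p.2 + 1)), G x = 0 := by
    intro x hx
    rw [hG]
    simp only
    rw [if_pos]
    by_contra h
    push_neg at h
    exact hx ⟨(x.1 - 1, x.2 - 1), by
      simp only [Prod.ext_iff]
      constructor <;> omega⟩
  have hcompeq : (G ∘ fun p : ℕ × ℕ => (p.1 + 1, p.2 + 1))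
      = fun p : ℕ × ℕ => ((p.2 + 1 : ℕ) : ℂ) * Q ^ ((p.1 + 1) * (p.2 + 1)) := by
    funext p
    simp [hG]
  have hcomp : HasSum G S := by
    rw [← hinj.hasSum_iff hrange, hcompeq]
    exact hFS
  have hfib := hcomp.tsum_fiberwise (fun p => p.1 * p.2)
  have h0 : (∑' b : (fun p : ℕ × ℕ => p.1 * p.2) ⁻¹' {(0 : ℕ)}, G b) = 0 := by
    have hz : ∀ b : (fun p : ℕ × ℕ => p.1 * p.2) ⁻¹' {(0 : ℕ)}, G b = 0 := by
      rintro ⟨⟨a, b⟩, hb⟩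
      simp only [Set.mem_preimage, Set.mem_singleton_iff, Nat.mul_eq_zero] at hb
      rw [hG]
      simp only
      rw [if_pos hb]
    calc (∑' b : (fun p : ℕ × ℕ => p.1 * p.2) ⁻¹' {(0 : ℕ)}, G b)
        = ∑' _b : (fun p : ℕ × ℕ => p.1 * p.2) ⁻¹' {(0 : ℕ)}, (0 : ℂ) := tsum_congr hz
      _ = 0 := tsum_zero
  have hn : ∀ m : ℕ, (∑' b : (fun p : ℕ × ℕ => p.1 * p.2) ⁻¹' {m + 1}, G b)
      = (∑ d ∈ (m + 1).divisors, (d : ℂ)) * Q ^ (m + 1) := by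
    intro m
    have hset : (fun p : ℕ × ℕ => p.1 * p.2) ⁻¹' {m + 1} = ↑((m + 1).divisorsAntidiagonal) := by
      ext p
      simp [Nat.mem_divisorsAntidiagonal]
    rw [hset, Finset.tsum_subtype' ((m + 1).divisorsAntidiagonal) G]
    have hGp : ∀ p ∈ (m + 1).divisorsAntidiagonal, G p = (p.2 : ℂ) * Q ^ (m + 1) := by
      intro p hp
      obtain ⟨hmul, -⟩ := Nat.mem_divisorsAntidiagonal.mp hp
      have h1 : ¬(p.1 = 0 ∨ p.2 = 0) := by
        rintro (h | h) <;> rw [h] at hmul <;> simp at hmul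
      rw [hG]
      simp only
      rw [if_neg h1, hmul]
    rw [Finset.sum_congr rfl hGp, ← Finset.sum_mul]
    congr 1
    exact Nat.sum_divisorsAntidiagonal' (f := fun _ j => (j : ℂ))
  have hshift := (hasSum_nat_add_iff'
    (f := fun m : ℕ => ∑' b : (fun p : ℕ × ℕ => p.1 * p.2) ⁻¹' {m}, G b) 1).2 hfib
  simp only [Finset.sum_range_one, h0, sub_zero] at hshift
  have hfinal : HasSum (fun m : ℕ => (∑ d ∈ (m + 1).divisors, (d : ℂ)) * Q ^ (m + 1)) S := by
    have heq : (fun m : ℕ => ∑' b : (fun p : ℕ × ℕ => p.1 * p.2) ⁻¹' {m + 1}, G b)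
        = fun m : ℕ => (∑ d ∈ (m + 1).divisors, (d : ℂ)) * Q ^ (m + 1) := funext hn
    rwa [heq] at hshift
  have : s1ser Q = S := hfinal.tsum_eq
  rw [this]
  exact hFS

/-- For `n ≥ 1`, `0 < k < n` and `q, v ∈ ℂ` with `0 < |q| < 1` and `|v| = 1`:
`X(vqᵏ,qⁿ) = Σ_{l≥1} l vˡ qᵏˡ + Σ_{m≥1} Σ_{l≥1} (l vˡ q⁽ᵐⁿ⁺ᵏ⁾ˡ + l v⁻ˡ q⁽ᵐⁿ⁻ᵏ⁾ˡ − 2l qᵐⁿˡ)` and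
`Y(vqᵏ,qⁿ) = Σ_{l≥2} ((l−1)l/2) vˡ qᵏˡ + Σ_{m≥1} Σ_{l≥1} (((l−1)l/2) vˡ q⁽ᵐⁿ⁺ᵏ⁾ˡ − (l(l+1)/2) v⁻ˡ q⁽ᵐⁿ⁻ᵏ⁾ˡ + l qᵐⁿˡ)`,
all series converging absolutely (the double series summed over pairs `(m,l)`). -/
theorem Xtate_Ytate_qexpansion_kpos (n k : ℕ) (hk0 : 0 < k) (hkn : k < n) (q v : ℂ)
    (hq0 : 0 < ‖q‖) (hq1 : ‖q‖ < 1) (hv : ‖v‖ = 1) :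
    Summable (fun m : ℤ => (q ^ n) ^ m * (v * q ^ k) / (1 - (q ^ n) ^ m * (v * q ^ k)) ^ 2) ∧
    Summable (fun m : ℤ =>
      ((q ^ n) ^ m * (v * q ^ k)) ^ 2 / (1 - (q ^ n) ^ m * (v * q ^ k)) ^ 3) ∧
    Summable (fun l : ℕ => ((l + 1 : ℕ) : ℂ) * v ^ (l + 1) * q ^ (k * (l + 1))) ∧
    Summable (fun p : ℕ × ℕ =>
      ((p.2 + 1 : ℕ) : ℂ) * v ^ (p.2 + 1) * q ^ (((p.1 + 1) * n + k) * (p.2 + 1))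
        + ((p.2 + 1 : ℕ) : ℂ) * v ^ (-((p.2 + 1 : ℕ) : ℤ)) * q ^ (((p.1 + 1) * n - k) * (p.2 + 1))
        - 2 * ((p.2 + 1 : ℕ) : ℂ) * q ^ ((p.1 + 1) * n * (p.2 + 1))) ∧
    Summable (fun l : ℕ =>
      (((l + 2 : ℕ) : ℂ) - 1) * ((l + 2 : ℕ) : ℂ) / 2 * v ^ (l + 2) * q ^ (k * (l + 2))) ∧
    Summable (fun p : ℕ × ℕ =>
      (((p.2 + 1 : ℕ) : ℂ) - 1) * ((p.2 + 1 : ℕ) : ℂ) / 2 * v ^ (p.2 + 1)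
          * q ^ (((p.1 + 1) * n + k) * (p.2 + 1))
        - ((p.2 + 1 : ℕ) : ℂ) * (((p.2 + 1 : ℕ) : ℂ) + 1) / 2 * v ^ (-((p.2 + 1 : ℕ) : ℤ))
          * q ^ (((p.1 + 1) * n - k) * (p.2 + 1))
        + ((p.2 + 1 : ℕ) : ℂ) * q ^ ((p.1 + 1) * n * (p.2 + 1))) ∧
    Xtate (v * q ^ k) (q ^ n) =
      (∑' l : ℕ, ((l + 1 : ℕ) : ℂ) * v ^ (l + 1) * q ^ (k * (l + 1))) +
      ∑' p : ℕ × ℕ,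
        (((p.2 + 1 : ℕ) : ℂ) * v ^ (p.2 + 1) * q ^ (((p.1 + 1) * n + k) * (p.2 + 1))
          + ((p.2 + 1 : ℕ) : ℂ) * v ^ (-((p.2 + 1 : ℕ) : ℤ))
            * q ^ (((p.1 + 1) * n - k) * (p.2 + 1))
          - 2 * ((p.2 + 1 : ℕ) : ℂ) * q ^ ((p.1 + 1) * n * (p.2 + 1))) ∧
    Ytate (v * q ^ k) (q ^ n) =
      (∑' l : ℕ,
        (((l + 2 : ℕ) : ℂ) - 1) * ((l + 2 : ℕ) : ℂ) / 2 * v ^ (l + 2) * q ^ (k * (l + 2))) +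
      ∑' p : ℕ × ℕ,
        ((((p.2 + 1 : ℕ) : ℂ) - 1) * ((p.2 + 1 : ℕ) : ℂ) / 2 * v ^ (p.2 + 1)
            * q ^ (((p.1 + 1) * n + k) * (p.2 + 1))
          - ((p.2 + 1 : ℕ) : ℂ) * (((p.2 + 1 : ℕ) : ℂ) + 1) / 2 * v ^ (-((p.2 + 1 : ℕ) : ℤ))
            * q ^ (((p.1 + 1) * n - k) * (p.2 + 1))
          + ((p.2 + 1 : ℕ) : ℂ) * q ^ ((p.1 + 1) * n * (p.2 + 1))) := by
    -- basic facts
  have hq' : q ≠ 0 := by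
    intro h; rw [h] at hq0; simp at hq0
  have hv0 : v ≠ 0 := by
    intro h; rw [h] at hv; simp at hv
  have hr1 : ‖q‖ < 1 := by exact hq1
  have hr0 : (0 : ℝ) ≤ ‖q‖ := norm_nonneg q
  have hvn : ‖v‖ = 1 := by exact hv
  have hn0 : n ≠ 0 := by omega
  have hu0 : v * q ^ k ≠ 0 := mul_ne_zero hv0 (pow_ne_zero _ hq')
  have hkle : ∀ m : ℕ, k ≤ (m + 1) * n := by
    intro m
    have h1 : n ≤ (m + 1) * n := Nat.le_mul_of_pos_left n (Nat.succ_pos m)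
    omega
  have hsplit : ∀ m : ℕ, ((m + 1) * n - k) + k = (m + 1) * n :=
    fun m => Nat.sub_add_cancel (hkle m)
  have hQn : ‖q ^ n‖ < 1 := by
    rw [norm_pow]; exact pow_lt_one₀ hr0 hr1 hn0
  have hnormP : ∀ e : ℕ, ‖v * q ^ e‖ = ‖q‖ ^ e := by
    intro e; rw [norm_mul, hvn, one_mul, norm_pow]
  have hnormN : ∀ e : ℕ, ‖v⁻¹ * q ^ e‖ = ‖q‖ ^ e := by
    intro e; rw [norm_mul, norm_inv, hvn, inv_one, one_mul, norm_pow]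
  have hltP : ∀ m : ℕ, ‖v * q ^ ((m + 1) * n + k)‖ < 1 := by
    intro m; rw [hnormP]; exact pow_lt_one₀ hr0 hr1 (by omega)
  have hu1 : ‖v * q ^ k‖ < 1 := by
    rw [hnormP]; exact pow_lt_one₀ hr0 hr1 (by omega)
  have heleN : ∀ m : ℕ, m + 1 ≤ (m + 1) * n - k := by
    intro m
    have h1 : (m + 1) * (k + 1) ≤ (m + 1) * n := Nat.mul_le_mul_left _ hkn
    have h2 : (m + 1) * (k + 1) = (m + 1) * k + (m + 1) := by ring
    have h3 : k ≤ (m + 1) * k := Nat.le_mul_of_pos_left k (Nat.succ_pos m)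
    omega
  have hltN : ∀ m : ℕ, ‖v⁻¹ * q ^ ((m + 1) * n - k)‖ < 1 := by
    intro m; rw [hnormN]
    exact pow_lt_one₀ hr0 hr1 (by have := heleN m; omega)
  -- identification of the summands over ℤ with nice closed forms
  have hxP : ∀ m : ℕ, (q ^ n) ^ ((m : ℤ) + 1) * (v * q ^ k) = v * q ^ ((m + 1) * n + k) := by
    intro m
    rw [show ((m : ℤ) + 1) = ((m + 1 : ℕ) : ℤ) by push_cast; ring, zpow_natCast, ← pow_mul,
      Nat.mul_comm n (m + 1), pow_add]
    ring
  have hyN : ∀ m : ℕ,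
      (q ^ n) ^ (-((m : ℤ) + 1)) * (v * q ^ k) = (v⁻¹ * q ^ ((m + 1) * n - k))⁻¹ := by
    intro m
    rw [show -((m : ℤ) + 1) = -((m + 1 : ℕ) : ℤ) by push_cast; ring, zpow_neg, zpow_natCast,
      mul_inv, inv_inv, ← pow_mul, Nat.mul_comm n (m + 1),
      show q ^ ((m + 1) * n) = q ^ ((m + 1) * n - k) * q ^ k by rw [← pow_add, hsplit m]]
    have hqe : q ^ ((m + 1) * n - k) ≠ 0 := pow_ne_zero _ hq'
    have hqk : q ^ k ≠ 0 := pow_ne_zero _ hq'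
    field_simp
  have hyN0 : ∀ m : ℕ, v⁻¹ * q ^ ((m + 1) * n - k) ≠ 0 :=
    fun m => mul_ne_zero (inv_ne_zero hv0) (pow_ne_zero _ hq')
  have hyN1 : ∀ m : ℕ, v⁻¹ * q ^ ((m + 1) * n - k) ≠ 1 := by
    intro m h
    have := hltN m
    rw [h] at this
    simp at this
  -- per-fiber expansions for X
  have hX0 : HasSum (fun l : ℕ => ((l + 1 : ℕ) : ℂ) * v ^ (l + 1) * q ^ (k * (l + 1)))
      ((v * q ^ k) / (1 - v * q ^ k) ^ 2) := by
    have h := geo2 hu1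
    have heq : (fun l : ℕ => ((l + 1 : ℕ) : ℂ) * v ^ (l + 1) * q ^ (k * (l + 1)))
        = fun l : ℕ => ((l + 1 : ℕ) : ℂ) * (v * q ^ k) ^ (l + 1) := by
      funext l; rw [powvq, ← mul_assoc]
    rw [heq]; exact h
  have hXpos : ∀ m : ℕ, HasSum
      (fun l : ℕ => ((l + 1 : ℕ) : ℂ) * v ^ (l + 1) * q ^ (((m + 1) * n + k) * (l + 1)))
      ((q ^ n) ^ ((m : ℤ) + 1) * (v * q ^ k)
        / (1 - (q ^ n) ^ ((m : ℤ) + 1) * (v * q ^ k)) ^ 2) := by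
    intro m
    rw [hxP m]
    have h := geo2 (hltP m)
    have heq : (fun l : ℕ => ((l + 1 : ℕ) : ℂ) * v ^ (l + 1) * q ^ (((m + 1) * n + k) * (l + 1)))
        = fun l : ℕ => ((l + 1 : ℕ) : ℂ) * (v * q ^ ((m + 1) * n + k)) ^ (l + 1) := by
      funext l; rw [powvq, ← mul_assoc]
    rw [heq]; exact h
  have hXneg : ∀ m : ℕ, HasSum
      (fun l : ℕ => ((l + 1 : ℕ) : ℂ) * v ^ (-((l + 1 : ℕ) : ℤ))
        * q ^ (((m + 1) * n - k) * (l + 1)))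
      ((q ^ n) ^ (-((m : ℤ) + 1)) * (v * q ^ k)
        / (1 - (q ^ n) ^ (-((m : ℤ) + 1)) * (v * q ^ k)) ^ 2) := by
    intro m
    rw [hyN m, inv2 _ (hyN0 m) (hyN1 m)]
    have h := geo2 (hltN m)
    have heq : (fun l : ℕ => ((l + 1 : ℕ) : ℂ) * v ^ (-((l + 1 : ℕ) : ℤ))
          * q ^ (((m + 1) * n - k) * (l + 1)))
        = fun l : ℕ => ((l + 1 : ℕ) : ℂ) * (v⁻¹ * q ^ ((m + 1) * n - k)) ^ (l + 1) := by
      funext l; rw [powvq', ← mul_assoc]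
    rw [heq]; exact h
  -- per-fiber expansions for Y
  have hY0 : HasSum (fun l : ℕ =>
        (((l + 2 : ℕ) : ℂ) - 1) * ((l + 2 : ℕ) : ℂ) / 2 * v ^ (l + 2) * q ^ (k * (l + 2)))
      ((v * q ^ k) ^ 2 / (1 - v * q ^ k) ^ 3) := by
    have h := (geo3 hu1).mul_left ((v * q ^ k) ^ 2)
    rw [show (v * q ^ k) ^ 2 * (1 / (1 - v * q ^ k) ^ 3)
      = (v * q ^ k) ^ 2 / (1 - v * q ^ k) ^ 3 by ring] at h
    have heq : (fun l : ℕ =>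
          (((l + 2 : ℕ) : ℂ) - 1) * ((l + 2 : ℕ) : ℂ) / 2 * v ^ (l + 2) * q ^ (k * (l + 2)))
        = fun l : ℕ => (v * q ^ k) ^ 2
            * (((l : ℂ) + 1) * ((l : ℂ) + 2) / 2 * (v * q ^ k) ^ l) := by
      funext l
      rw [mul_assoc, ← powvq v q k (l + 2)]
      push_cast
      ring
    rw [heq]; exact h
  have hYpos : ∀ m : ℕ, HasSum (fun l : ℕ =>
        (((l + 1 : ℕ) : ℂ) - 1) * ((l + 1 : ℕ) : ℂ) / 2 * v ^ (l + 1)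
          * q ^ (((m + 1) * n + k) * (l + 1)))
      (((q ^ n) ^ ((m : ℤ) + 1) * (v * q ^ k)) ^ 2
        / (1 - (q ^ n) ^ ((m : ℤ) + 1) * (v * q ^ k)) ^ 3) := by
    intro m
    rw [hxP m]
    have h := geo3b (hltP m)
    have heq : (fun l : ℕ => (((l + 1 : ℕ) : ℂ) - 1) * ((l + 1 : ℕ) : ℂ) / 2 * v ^ (l + 1)
          * q ^ (((m + 1) * n + k) * (l + 1)))
        = fun l : ℕ => (l : ℂ) * ((l : ℂ) + 1) / 2 * (v * q ^ ((m + 1) * n + k)) ^ (l + 1) := by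
      funext l
      rw [powvq]
      push_cast
      ring
    rw [heq]; exact h
  have hYneg : ∀ m : ℕ, HasSum (fun l : ℕ =>
        ((l + 1 : ℕ) : ℂ) * (((l + 1 : ℕ) : ℂ) + 1) / 2 * v ^ (-((l + 1 : ℕ) : ℤ))
          * q ^ (((m + 1) * n - k) * (l + 1)))
      ((v⁻¹ * q ^ ((m + 1) * n - k)) / (1 - v⁻¹ * q ^ ((m + 1) * n - k)) ^ 3) := by
    intro m
    have h := geo3a (hltN m)
    have heq : (fun l : ℕ => ((l + 1 : ℕ) : ℂ) * (((l + 1 : ℕ) : ℂ) + 1) / 2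
          * v ^ (-((l + 1 : ℕ) : ℤ)) * q ^ (((m + 1) * n - k) * (l + 1)))
        = fun l : ℕ => ((l : ℂ) + 1) * ((l : ℂ) + 2) / 2
            * (v⁻¹ * q ^ ((m + 1) * n - k)) ^ (l + 1) := by
      funext l
      rw [powvq']
      push_cast
      ring
    rw [heq]; exact h
  have hYnegval : ∀ m : ℕ,
      ((q ^ n) ^ (-((m : ℤ) + 1)) * (v * q ^ k)) ^ 2
          / (1 - (q ^ n) ^ (-((m : ℤ) + 1)) * (v * q ^ k)) ^ 3
        = -((v⁻¹ * q ^ ((m + 1) * n - k)) / (1 - v⁻¹ * q ^ ((m + 1) * n - k)) ^ 3) := by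
    intro m
    rw [hyN m]
    exact inv3 _ (hyN0 m) (hyN1 m)
  -- summability of the six pair families
  have hexpP : ∀ p : ℕ × ℕ, (p.1 + 1) * (p.2 + 1) ≤ ((p.1 + 1) * n + k) * (p.2 + 1) := by
    intro p
    apply Nat.mul_le_mul_right
    have h1 : p.1 + 1 ≤ (p.1 + 1) * n := Nat.le_mul_of_pos_right (p.1 + 1) (by omega)
    omega
  have hexpN : ∀ p : ℕ × ℕ, (p.1 + 1) * (p.2 + 1) ≤ ((p.1 + 1) * n - k) * (p.2 + 1) := by
    intro p
    exact Nat.mul_le_mul_right _ (heleN p.1)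
  have hexp0 : ∀ p : ℕ × ℕ, (p.1 + 1) * (p.2 + 1) ≤ (p.1 + 1) * n * (p.2 + 1) := by
    intro p
    apply Nat.mul_le_mul_right
    exact Nat.le_mul_of_pos_right (p.1 + 1) (by omega)
  have hcoef1 : ∀ l : ℕ, ‖((l + 1 : ℕ) : ℂ)‖ ≤ ((l + 1 : ℕ) : ℝ) ^ 1 := by
    intro l; rw [Complex.norm_natCast, pow_one]
  have hcoefY1 : ∀ l : ℕ, ‖(((l + 1 : ℕ) : ℂ) - 1) * ((l + 1 : ℕ) : ℂ) / 2‖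
      ≤ ((l + 1 : ℕ) : ℝ) ^ 2 := by
    intro l
    rw [show (((l + 1 : ℕ) : ℂ) - 1) = ((l : ℕ) : ℂ) by push_cast; ring]
    rw [norm_div, norm_mul, Complex.norm_natCast, Complex.norm_natCast,
      show ‖(2 : ℂ)‖ = 2 by norm_num]
    have h1 : ((l : ℕ) : ℝ) ≤ ((l + 1 : ℕ) : ℝ) := by exact_mod_cast Nat.le_succ l
    have h2 : (0 : ℝ) ≤ ((l : ℕ) : ℝ) := Nat.cast_nonneg l
    have h3 : (0 : ℝ) ≤ ((l + 1 : ℕ) : ℝ) := Nat.cast_nonneg _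
    nlinarith
  have hcoefY2 : ∀ l : ℕ, ‖((l + 1 : ℕ) : ℂ) * (((l + 1 : ℕ) : ℂ) + 1) / 2‖
      ≤ ((l + 1 : ℕ) : ℝ) ^ 2 := by
    intro l
    rw [show (((l + 1 : ℕ) : ℂ) + 1) = ((l + 2 : ℕ) : ℂ) by push_cast; ring]
    rw [norm_div, norm_mul, Complex.norm_natCast, Complex.norm_natCast,
      show ‖(2 : ℂ)‖ = 2 by norm_num]
    have h1 : ((l + 2 : ℕ) : ℝ) ≤ 2 * ((l + 1 : ℕ) : ℝ) := by
      push_cast; nlinarith [Nat.cast_nonneg (α := ℝ) l]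
    have h3 : (0 : ℝ) ≤ ((l + 1 : ℕ) : ℝ) := Nat.cast_nonneg _
    nlinarith
  have hnormv : ∀ l : ℕ, ‖v ^ (l + 1)‖ = 1 := by
    intro l; rw [norm_pow, hvn, one_pow]
  have hnormvz : ∀ l : ℕ, ‖v ^ (-((l + 1 : ℕ) : ℤ))‖ = 1 := by
    intro l; rw [norm_zpow, hvn, one_zpow]
  have key : ∀ (j : ℕ) (c : ℕ → ℂ) (E : ℕ × ℕ → ℕ) (w : ℕ → ℂ),
      (∀ l, ‖c l‖ ≤ ((l + 1 : ℕ) : ℝ) ^ j) → (∀ l, ‖w l‖ = 1) →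
      (∀ p : ℕ × ℕ, (p.1 + 1) * (p.2 + 1) ≤ E p) →
      Summable (fun p : ℕ × ℕ => c p.2 * w p.2 * q ^ E p) := by
    intro j c E w hc hw hE
    apply Summable.of_norm
    refine Summable.of_nonneg_of_le (fun p => norm_nonneg _) (fun p => ?_) (sumbound hr0 hr1 j)
    rw [norm_mul, norm_mul, hw, mul_one, norm_pow]
    have h1 : ‖q‖ ^ E p ≤ ‖q‖ ^ ((p.1 + 1) * (p.2 + 1)) :=
      pow_le_pow_of_le_one hr0 hr1.le (hE p)
    have h2 : (0 : ℝ) ≤ ‖q‖ ^ E p := by positivity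
    calc ‖c p.2‖ * ‖q‖ ^ E p ≤ ((p.2 + 1 : ℕ) : ℝ) ^ j * ‖q‖ ^ E p :=
          mul_le_mul_of_nonneg_right (hc p.2) h2
      _ ≤ ((p.2 + 1 : ℕ) : ℝ) ^ j * ‖q‖ ^ ((p.1 + 1) * (p.2 + 1)) :=
          mul_le_mul_of_nonneg_left h1 (by positivity)
  have hsumXpos : Summable (fun p : ℕ × ℕ =>
      ((p.2 + 1 : ℕ) : ℂ) * v ^ (p.2 + 1) * q ^ (((p.1 + 1) * n + k) * (p.2 + 1))) :=
    key 1 (fun l => ((l + 1 : ℕ) : ℂ)) _ (fun l => v ^ (l + 1)) hcoef1 hnormv hexpP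
  have hsumXneg : Summable (fun p : ℕ × ℕ =>
      ((p.2 + 1 : ℕ) : ℂ) * v ^ (-((p.2 + 1 : ℕ) : ℤ)) * q ^ (((p.1 + 1) * n - k) * (p.2 + 1))) :=
    key 1 (fun l => ((l + 1 : ℕ) : ℂ)) _ (fun l => v ^ (-((l + 1 : ℕ) : ℤ))) hcoef1 hnormvz hexpN
  have hsumX0 : Summable (fun p : ℕ × ℕ =>
      ((p.2 + 1 : ℕ) : ℂ) * q ^ ((p.1 + 1) * n * (p.2 + 1))) := by
    have h := key 1 (fun l => ((l + 1 : ℕ) : ℂ)) (fun p => (p.1 + 1) * n * (p.2 + 1))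
      (fun _ => 1) hcoef1 (fun _ => norm_one) hexp0
    simpa using h
  have hsumYpos : Summable (fun p : ℕ × ℕ =>
      (((p.2 + 1 : ℕ) : ℂ) - 1) * ((p.2 + 1 : ℕ) : ℂ) / 2 * v ^ (p.2 + 1)
        * q ^ (((p.1 + 1) * n + k) * (p.2 + 1))) :=
    key 2 (fun l => (((l + 1 : ℕ) : ℂ) - 1) * ((l + 1 : ℕ) : ℂ) / 2) _
      (fun l => v ^ (l + 1)) hcoefY1 hnormv hexpP
  have hsumYneg : Summable (fun p : ℕ × ℕ =>
      ((p.2 + 1 : ℕ) : ℂ) * (((p.2 + 1 : ℕ) : ℂ) + 1) / 2 * v ^ (-((p.2 + 1 : ℕ) : ℤ))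
        * q ^ (((p.1 + 1) * n - k) * (p.2 + 1))) :=
    key 2 (fun l => ((l + 1 : ℕ) : ℂ) * (((l + 1 : ℕ) : ℂ) + 1) / 2) _
      (fun l => v ^ (-((l + 1 : ℕ) : ℤ))) hcoefY2 hnormvz hexpN
  -- the s₁ pair family
  have hC : HasSum (fun p : ℕ × ℕ =>
      ((p.2 + 1 : ℕ) : ℂ) * q ^ ((p.1 + 1) * n * (p.2 + 1))) (s1ser (q ^ n)) := by
    have h := hasSum_s1 hQn
    have heq : (fun p : ℕ × ℕ => ((p.2 + 1 : ℕ) : ℂ) * q ^ ((p.1 + 1) * n * (p.2 + 1)))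
        = fun p : ℕ × ℕ => ((p.2 + 1 : ℕ) : ℂ) * (q ^ n) ^ ((p.1 + 1) * (p.2 + 1)) := by
      funext p
      rw [← pow_mul, show n * ((p.1 + 1) * (p.2 + 1)) = (p.1 + 1) * n * (p.2 + 1) by ring]
    rw [heq]; exact h
  -- assemble X over ℤ
  have hA := hsumXpos.hasSum
  have hB := hsumXneg.hasSum
  set SA := ∑' p : ℕ × ℕ,
    ((p.2 + 1 : ℕ) : ℂ) * v ^ (p.2 + 1) * q ^ (((p.1 + 1) * n + k) * (p.2 + 1)) with hSA
  set SB := ∑' p : ℕ × ℕ,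
    ((p.2 + 1 : ℕ) : ℂ) * v ^ (-((p.2 + 1 : ℕ) : ℤ)) * q ^ (((p.1 + 1) * n - k) * (p.2 + 1))
    with hSB
  have hfibP : HasSum (fun m : ℕ => (q ^ n) ^ ((m : ℤ) + 1) * (v * q ^ k)
      / (1 - (q ^ n) ^ ((m : ℤ) + 1) * (v * q ^ k)) ^ 2) SA :=
    hA.prod_fiberwise hXpos
  have hfibN : HasSum (fun m : ℕ => (q ^ n) ^ (-((m : ℤ) + 1)) * (v * q ^ k)
      / (1 - (q ^ n) ^ (-((m : ℤ) + 1)) * (v * q ^ k)) ^ 2) SB :=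
    hB.prod_fiberwise hXneg
  have hnatP : HasSum (fun m : ℕ => (q ^ n) ^ ((m : ℕ) : ℤ) * (v * q ^ k)
      / (1 - (q ^ n) ^ ((m : ℕ) : ℤ) * (v * q ^ k)) ^ 2)
      (SA + (v * q ^ k) / (1 - v * q ^ k) ^ 2) := by
    have hsh : HasSum (fun m : ℕ => (q ^ n) ^ (((m + 1 : ℕ) : ℕ) : ℤ) * (v * q ^ k)
        / (1 - (q ^ n) ^ (((m + 1 : ℕ) : ℕ) : ℤ) * (v * q ^ k)) ^ 2) SA := by
      have heq : ∀ m : ℕ, (((m + 1 : ℕ) : ℕ) : ℤ) = (m : ℤ) + 1 := by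
        intro m; push_cast; ring
      simp only [heq]
      exact hfibP
    have h := (hasSum_nat_add_iff (f := fun m : ℕ => (q ^ n) ^ ((m : ℕ) : ℤ) * (v * q ^ k)
      / (1 - (q ^ n) ^ ((m : ℕ) : ℤ) * (v * q ^ k)) ^ 2) 1).1 hsh
    rw [Finset.sum_range_one] at h
    simpa using h
  have hZX : HasSum (fun m : ℤ => (q ^ n) ^ m * (v * q ^ k)
      / (1 - (q ^ n) ^ m * (v * q ^ k)) ^ 2)
      (SA + (v * q ^ k) / (1 - v * q ^ k) ^ 2 + SB) :=
    hnatP.of_nat_of_neg_add_one hfibN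
  -- assemble Y over ℤ
  have hAy := hsumYpos.hasSum
  have hBy := hsumYneg.hasSum
  set SAy := ∑' p : ℕ × ℕ, (((p.2 + 1 : ℕ) : ℂ) - 1) * ((p.2 + 1 : ℕ) : ℂ) / 2 * v ^ (p.2 + 1)
    * q ^ (((p.1 + 1) * n + k) * (p.2 + 1)) with hSAy
  set SBy := ∑' p : ℕ × ℕ, ((p.2 + 1 : ℕ) : ℂ) * (((p.2 + 1 : ℕ) : ℂ) + 1) / 2
    * v ^ (-((p.2 + 1 : ℕ) : ℤ)) * q ^ (((p.1 + 1) * n - k) * (p.2 + 1)) with hSBy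
  have hfibPy : HasSum (fun m : ℕ => ((q ^ n) ^ ((m : ℤ) + 1) * (v * q ^ k)) ^ 2
      / (1 - (q ^ n) ^ ((m : ℤ) + 1) * (v * q ^ k)) ^ 3) SAy :=
    hAy.prod_fiberwise hYpos
  have hfibNy : HasSum (fun m : ℕ => (v⁻¹ * q ^ ((m + 1) * n - k))
      / (1 - v⁻¹ * q ^ ((m + 1) * n - k)) ^ 3) SBy :=
    hBy.prod_fiberwise hYneg
  have hfibNy' : HasSum (fun m : ℕ => ((q ^ n) ^ (-((m : ℤ) + 1)) * (v * q ^ k)) ^ 2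
      / (1 - (q ^ n) ^ (-((m : ℤ) + 1)) * (v * q ^ k)) ^ 3) (-SBy) := by
    have heq : (fun m : ℕ => ((q ^ n) ^ (-((m : ℤ) + 1)) * (v * q ^ k)) ^ 2
        / (1 - (q ^ n) ^ (-((m : ℤ) + 1)) * (v * q ^ k)) ^ 3)
        = fun m : ℕ => -((v⁻¹ * q ^ ((m + 1) * n - k))
          / (1 - v⁻¹ * q ^ ((m + 1) * n - k)) ^ 3) := funext hYnegval
    rw [heq]
    exact hfibNy.neg
  have hnatPy : HasSum (fun m : ℕ => ((q ^ n) ^ ((m : ℕ) : ℤ) * (v * q ^ k)) ^ 2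
      / (1 - (q ^ n) ^ ((m : ℕ) : ℤ) * (v * q ^ k)) ^ 3)
      (SAy + (v * q ^ k) ^ 2 / (1 - v * q ^ k) ^ 3) := by
    have hsh : HasSum (fun m : ℕ => ((q ^ n) ^ (((m + 1 : ℕ) : ℕ) : ℤ) * (v * q ^ k)) ^ 2
        / (1 - (q ^ n) ^ (((m + 1 : ℕ) : ℕ) : ℤ) * (v * q ^ k)) ^ 3) SAy := by
      have heq : ∀ m : ℕ, (((m + 1 : ℕ) : ℕ) : ℤ) = (m : ℤ) + 1 := by
        intro m; push_cast; ring
      simp only [heq]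
      exact hfibPy
    have h := (hasSum_nat_add_iff (f := fun m : ℕ => ((q ^ n) ^ ((m : ℕ) : ℤ) * (v * q ^ k)) ^ 2
      / (1 - (q ^ n) ^ ((m : ℕ) : ℤ) * (v * q ^ k)) ^ 3) 1).1 hsh
    rw [Finset.sum_range_one] at h
    simpa using h
  have hZY : HasSum (fun m : ℤ => ((q ^ n) ^ m * (v * q ^ k)) ^ 2
      / (1 - (q ^ n) ^ m * (v * q ^ k)) ^ 3)
      (SAy + (v * q ^ k) ^ 2 / (1 - v * q ^ k) ^ 3 + -SBy) :=
    hnatPy.of_nat_of_neg_add_one hfibNy'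
  -- combined pair families
  have hXcombo : HasSum (fun p : ℕ × ℕ =>
      ((p.2 + 1 : ℕ) : ℂ) * v ^ (p.2 + 1) * q ^ (((p.1 + 1) * n + k) * (p.2 + 1))
        + ((p.2 + 1 : ℕ) : ℂ) * v ^ (-((p.2 + 1 : ℕ) : ℤ)) * q ^ (((p.1 + 1) * n - k) * (p.2 + 1))
        - 2 * ((p.2 + 1 : ℕ) : ℂ) * q ^ ((p.1 + 1) * n * (p.2 + 1)))
      (SA + SB - 2 * s1ser (q ^ n)) := by
    have h := (hA.add hB).sub (hC.mul_left 2)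
    have heq : (fun p : ℕ × ℕ =>
        ((p.2 + 1 : ℕ) : ℂ) * v ^ (p.2 + 1) * q ^ (((p.1 + 1) * n + k) * (p.2 + 1))
          + ((p.2 + 1 : ℕ) : ℂ) * v ^ (-((p.2 + 1 : ℕ) : ℤ))
            * q ^ (((p.1 + 1) * n - k) * (p.2 + 1))
          - 2 * ((p.2 + 1 : ℕ) : ℂ) * q ^ ((p.1 + 1) * n * (p.2 + 1)))
        = fun p : ℕ × ℕ =>
          (((p.2 + 1 : ℕ) : ℂ) * v ^ (p.2 + 1) * q ^ (((p.1 + 1) * n + k) * (p.2 + 1))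
            + ((p.2 + 1 : ℕ) : ℂ) * v ^ (-((p.2 + 1 : ℕ) : ℤ))
              * q ^ (((p.1 + 1) * n - k) * (p.2 + 1)))
          - 2 * (((p.2 + 1 : ℕ) : ℂ) * q ^ ((p.1 + 1) * n * (p.2 + 1))) := by
      funext p; ring
    rw [heq]
    exact h
  have hYcombo : HasSum (fun p : ℕ × ℕ =>
      (((p.2 + 1 : ℕ) : ℂ) - 1) * ((p.2 + 1 : ℕ) : ℂ) / 2 * v ^ (p.2 + 1)
          * q ^ (((p.1 + 1) * n + k) * (p.2 + 1))
        - ((p.2 + 1 : ℕ) : ℂ) * (((p.2 + 1 : ℕ) : ℂ) + 1) / 2 * v ^ (-((p.2 + 1 : ℕ) : ℤ))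
          * q ^ (((p.1 + 1) * n - k) * (p.2 + 1))
        + ((p.2 + 1 : ℕ) : ℂ) * q ^ ((p.1 + 1) * n * (p.2 + 1)))
      (SAy - SBy + s1ser (q ^ n)) := by
    have h := (hAy.sub hBy).add hC
    have heq : (fun p : ℕ × ℕ =>
        (((p.2 + 1 : ℕ) : ℂ) - 1) * ((p.2 + 1 : ℕ) : ℂ) / 2 * v ^ (p.2 + 1)
            * q ^ (((p.1 + 1) * n + k) * (p.2 + 1))
          - ((p.2 + 1 : ℕ) : ℂ) * (((p.2 + 1 : ℕ) : ℂ) + 1) / 2 * v ^ (-((p.2 + 1 : ℕ) : ℤ))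
            * q ^ (((p.1 + 1) * n - k) * (p.2 + 1))
          + ((p.2 + 1 : ℕ) : ℂ) * q ^ ((p.1 + 1) * n * (p.2 + 1)))
        = fun p : ℕ × ℕ =>
          ((((p.2 + 1 : ℕ) : ℂ) - 1) * ((p.2 + 1 : ℕ) : ℂ) / 2 * v ^ (p.2 + 1)
              * q ^ (((p.1 + 1) * n + k) * (p.2 + 1))
            - ((p.2 + 1 : ℕ) : ℂ) * (((p.2 + 1 : ℕ) : ℂ) + 1) / 2 * v ^ (-((p.2 + 1 : ℕ) : ℤ))
              * q ^ (((p.1 + 1) * n - k) * (p.2 + 1)))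
          + ((p.2 + 1 : ℕ) : ℂ) * q ^ ((p.1 + 1) * n * (p.2 + 1)) := by
      funext p; ring
    rw [heq]
    exact h
  refine ⟨hZX.summable, hZY.summable, hX0.summable, hXcombo.summable, hY0.summable,
    hYcombo.summable, ?_, ?_⟩
  · simp only [Xtate]
    rw [hZX.tsum_eq, hXcombo.tsum_eq, hX0.tsum_eq]
    ring
  · simp only [Ytate]
    rw [hZY.tsum_eq, hYcombo.tsum_eq, hY0.tsum_eq]
    ring
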